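/- For any π ∈ S_n, the orbit of π under the dual Foata–Strehl action has cardinality |Orb_φ(π)| = 2^{n − v(π)}, where v(π) is the number of vales of π. -/

import Mathlib

/-- The extended one-line word of `w`, read 1-indexed, with the boundary
convention `π₀ = π_{n+1} = ∞`. -/
def ext (w : List ℕ) (i : ℕ) : ℕ∞ :=
  if 1 ≤ i ∧ i ≤ w.length then (w.getD (i - 1) 0 : ℕ∞) else ⊤

/-- The pinnacle set of the word `w`: values `π_i` with `π_{i-1} < π_i > π_{i+1}`. -/
def pinnSet (w : List ℕ) : Finset ℕ :=
  ((Finset.Icc 1 w.length).filter fun i =>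
      ext w (i - 1) < ext w i ∧ ext w (i + 1) < ext w i).image fun i => w.getD (i - 1) 0

/-- The vale set of the word `w`: values `π_i` with `π_{i-1} > π_i < π_{i+1}`. -/
def valeSet (w : List ℕ) : Finset ℕ :=
  ((Finset.Icc 1 w.length).filter fun i =>
      ext w i < ext w (i - 1) ∧ ext w i < ext w (i + 1)).image fun i => w.getD (i - 1) 0

/-- `w` is the one-line notation of a permutation of `[n] = {1, …, n}`. -/
def IsPermOf (n : ℕ) (w : List ℕ) : Prop := w.Perm (List.range' 1 n)

/-- `w₁` in the `x`-factorization `w = w₁ w₂ x w₄ w₅`. -/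
def fsW1 (x : ℕ) (w : List ℕ) : List ℕ :=
  ((w.take (w.idxOf x)).reverse.dropWhile fun a => decide (a < x)).reverse

/-- `w₂` in the `x`-factorization: the longest contiguous subword immediately to the
left of `x` all of whose letters are smaller than `x`. -/
def fsW2 (x : ℕ) (w : List ℕ) : List ℕ :=
  ((w.take (w.idxOf x)).reverse.takeWhile fun a => decide (a < x)).reverse

/-- `w₄` in the `x`-factorization: the longest contiguous subword immediately to the
right of `x` all of whose letters are smaller than `x`. -/
def fsW4 (x : ℕ) (w : List ℕ) : List ℕ :=
  (w.drop (w.idxOf x + 1)).takeWhile fun a => decide (a < x)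

/-- `w₅` in the `x`-factorization `w = w₁ w₂ x w₄ w₅`. -/
def fsW5 (x : ℕ) (w : List ℕ) : List ℕ :=
  (w.drop (w.idxOf x + 1)).dropWhile fun a => decide (a < x)

/-- The dual Foata–Strehl map `φ_x : w₁ w₂ x w₄ w₅ ↦ w₁ w₄ x w₂ w₅`. -/
def dualFS (x : ℕ) (w : List ℕ) : List ℕ :=
  if x ∈ w then fsW1 x w ++ fsW4 x w ++ [x] ++ fsW2 x w ++ fsW5 x w else w

/-- The dual Foata–Strehl map `φ_S` for a set `S`, i.e. the composition of the
(commuting) maps `φ_x` over `x ∈ S`. -/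
noncomputable def dualFSFinset (S : Finset ℕ) (w : List ℕ) : List ℕ :=
  S.toList.foldr dualFS w

/-- The largest letter of a word, with `wmax [] = 0`. -/
def wmax (w : List ℕ) : ℕ := w.foldr max 0

/-- The subword of `w` consisting of the letters lying in `A`. -/
def restrictTo (w : List ℕ) (A : Finset ℕ) : List ℕ :=
  w.filter fun a => decide (a ∈ A)

/-- `N_{PV}(k) = |V_k| - |P_k|` (natural subtraction). -/
def nPV (P V : Finset ℕ) (k : ℕ) : ℕ :=
  (V.filter fun v => v < k).card - (P.filter fun p => p < k).card

/-- `N_{PV}(k) = |V_k| - |P_k|` as an integer. -/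
def nPVZ (P V : Finset ℕ) (k : ℕ) : ℤ :=
  ((V.filter fun v => v < k).card : ℤ) - ((P.filter fun p => p < k).card : ℤ)

/-- `(P, V)` is admissible: some permutation of `[n]` has pinnacle set `P` and
vale set `V`. -/
def AdmissiblePair (n : ℕ) (P V : Finset ℕ) : Prop :=
  ∃ w : List ℕ, IsPermOf n w ∧ pinnSet w = P ∧ valeSet w = V

open Classical in
/-- `𝒱(P)`: the collection of all vale sets `V` for which `(P, V)` is admissible. -/
noncomputable def valeSetsOf (n : ℕ) (P : Finset ℕ) : Finset (Finset ℕ) :=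
  ((Finset.Icc 1 n).powerset).filter fun V => AdmissiblePair n P V

/-- `w` is FS-minimal: it has no double descents (with the `∞` boundary convention),
and for each pinnacle `p`, the `p`-factorization of the restriction of `w` to its
pinnacles and vales satisfies `max w₂ < max w₄`. -/
def FSMinimal (w : List ℕ) : Prop :=
  (∀ i ∈ Finset.Icc 1 w.length,
      ¬(ext w i < ext w (i - 1) ∧ ext w (i + 1) < ext w i)) ∧
  ∀ p ∈ pinnSet w,
    wmax (fsW2 p (restrictTo w (pinnSet w ∪ valeSet w))) <
      wmax (fsW4 p (restrictTo w (pinnSet w ∪ valeSet w)))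

/-- A `PV`-arrangement: a word listing each element of `P ∪ V` exactly once,
with pinnacle set `P` and vale set `V`. -/
def IsPVArrangement (P V : Finset ℕ) (α : List ℕ) : Prop :=
  α.Nodup ∧ α.toFinset = P ∪ V ∧ pinnSet α = P ∧ valeSet α = V

/-- A word is canonical (for pinnacle set `P`) if for each `p ∈ P` its
`p`-factorization satisfies `max w₂ < max w₄`. -/
def IsCanonical (P : Finset ℕ) (α : List ℕ) : Prop :=
  ∀ p ∈ P, wmax (fsW2 p α) < wmax (fsW4 p α)

/-- The number of descents of `w`: indices `j ∈ [n-1]` with `π_j > π_{j+1}`. -/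
def descentCount (w : List ℕ) : ℕ :=
  ((Finset.Icc 1 (w.length - 1)).filter fun j => w.getD j 0 < w.getD (j - 1) 0).card

/-- The original Foata–Strehl map `φ'_x`, defined like `φ_x` but with the words
`w₂, w₄` consisting of letters GREATER than `x`. -/
def origFS (x : ℕ) (w : List ℕ) : List ℕ :=
  if x ∈ w then
    ((w.take (w.idxOf x)).reverse.dropWhile fun a => decide (x < a)).reverse
      ++ ((w.drop (w.idxOf x + 1)).takeWhile fun a => decide (x < a)) ++ [x]
      ++ ((w.take (w.idxOf x)).reverse.takeWhile fun a => decide (x < a)).reverse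
      ++ ((w.drop (w.idxOf x + 1)).dropWhile fun a => decide (x < a))
  else w

/-- `C(l)`: weak compositions `(t₁, …, t_l)` of `l` with `t₁ + ⋯ + t_k ≥ k` for all `k`. -/
def weakComps (l : ℕ) : Finset (Fin l → ℕ) :=
  (Fintype.piFinset fun _ : Fin l => Finset.range (l + 1)).filter fun t =>
    (∑ i, t i) = l ∧ ∀ k : Fin l, (k : ℕ) + 1 ≤ ∑ i ∈ Finset.univ.filter (fun j => j ≤ k), t i

/-- `g_{i+1} = |G_{i+1}|`, the size of the `(i+1)`-st gap set
`G_{i+1} = {j ∈ [n] \ P : p_i < j < p_{i+1}}` (0-indexed `i`, with `p₀ = 1`). -/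
def gapCard (n : ℕ) (P : Finset ℕ) (i : ℕ) : ℕ :=
  (((Finset.Icc 1 n) \ P).filter fun j =>
      (if i = 0 then 1 else (P.sort (· ≤ ·)).getD (i - 1) 0) < j ∧
        j < (P.sort (· ≤ ·)).getD i 0).card

section OrbitProof

section C1

lemma takeWhile_middle {p : ℕ → Bool} {M : ℕ} (h : p M = false) (l r : List ℕ) :
    (l ++ M :: r).takeWhile p = l.takeWhile p := by
  induction l with
  | nil => simp [List.takeWhile_cons, h]
  | cons a t ih => simp only [List.cons_append, List.takeWhile_cons, ih]

lemma dropWhile_middle {p : ℕ → Bool} {M : ℕ} (h : p M = false) (l r : List ℕ) :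
    (l ++ M :: r).dropWhile p = l.dropWhile p ++ M :: r := by
  induction l with
  | nil => simp [List.dropWhile_cons, h]
  | cons a t ih =>
    simp only [List.cons_append, List.dropWhile_cons, ih]
    cases hpa : p a <;> simp [ih]

lemma fs12 (x : ℕ) (w : List ℕ) : fsW1 x w ++ fsW2 x w = w.take (w.idxOf x) := by
  rw [fsW1, fsW2, ← List.reverse_append, List.takeWhile_append_dropWhile, List.reverse_reverse]

lemma fs45 (x : ℕ) (w : List ℕ) : fsW4 x w ++ fsW5 x w = w.drop (w.idxOf x + 1) := by
  rw [fsW4, fsW5, List.takeWhile_append_dropWhile]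

lemma fs_decomp {x : ℕ} {w : List ℕ} (hx : x ∈ w) :
    w = fsW1 x w ++ fsW2 x w ++ [x] ++ fsW4 x w ++ fsW5 x w := by
  have hi : w.idxOf x < w.length := List.idxOf_lt_length_iff.2 hx
  have h0 : w[w.idxOf x] = x := List.getElem_idxOf hi
  rw [List.append_assoc _ _ (fsW5 x w), fs45, fs12, List.append_assoc]
  conv_lhs => rw [← List.take_append_drop (w.idxOf x) w]
  congr 1
  rw [List.drop_eq_getElem_cons hi, h0]; rfl

lemma dualFS_of_mem {x : ℕ} {w : List ℕ} (hx : x ∈ w) :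
    dualFS x w = fsW1 x w ++ fsW4 x w ++ [x] ++ fsW2 x w ++ fsW5 x w := if_pos hx

lemma dualFS_of_not_mem {x : ℕ} {w : List ℕ} (hx : x ∉ w) : dualFS x w = w := if_neg hx

lemma dualFS_perm (x : ℕ) (w : List ℕ) : (dualFS x w).Perm w := by
  by_cases hx : x ∈ w
  · rw [dualFS_of_mem hx]
    conv_rhs => rw [fs_decomp hx]
    refine List.perm_iff_count.2 fun a => ?_
    simp only [List.count_append]
    ring
  · rw [dualFS_of_not_mem hx]

lemma mem_dualFS {x a : ℕ} {w : List ℕ} : a ∈ dualFS x w ↔ a ∈ w :=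
  (dualFS_perm x w).mem_iff

lemma mem_fsW2_lt {x a : ℕ} {w : List ℕ} (h : a ∈ fsW2 x w) : a < x := by
  rw [fsW2, List.mem_reverse] at h
  simpa using List.mem_takeWhile_imp h

lemma mem_fsW4_lt {x a : ℕ} {w : List ℕ} (h : a ∈ fsW4 x w) : a < x :=
  by simpa using List.mem_takeWhile_imp h

end C1

section C2

lemma dualFS_append_left {x M : ℕ} {a b : List ℕ} (hx : x ∈ a) (hxM : x < M) :
    dualFS x (a ++ M :: b) = dualFS x a ++ M :: b := by
  have hpM : (fun y => decide (y < x)) M = false := by simp; omega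
  have hi : a.idxOf x < a.length := List.idxOf_lt_length_iff.2 hx
  have hidx : (a ++ M :: b).idxOf x = a.idxOf x := List.idxOf_append_of_mem hx
  have htake : (a ++ M :: b).take ((a ++ M :: b).idxOf x) = a.take (a.idxOf x) := by
    rw [hidx, List.take_append,
      Nat.sub_eq_zero_of_le (by omega), List.take_zero, List.append_nil]
  have hdrop : (a ++ M :: b).drop ((a ++ M :: b).idxOf x + 1)
      = a.drop (a.idxOf x + 1) ++ M :: b := by
    rw [hidx, List.drop_append, Nat.sub_eq_zero_of_le (by omega), List.drop_zero]
  have h1 : fsW1 x (a ++ M :: b) = fsW1 x a := by rw [fsW1, fsW1, htake]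
  have h2 : fsW2 x (a ++ M :: b) = fsW2 x a := by rw [fsW2, fsW2, htake]
  have h4 : fsW4 x (a ++ M :: b) = fsW4 x a := by
    rw [fsW4, fsW4, hdrop, takeWhile_middle hpM]
  have h5 : fsW5 x (a ++ M :: b) = fsW5 x a ++ M :: b := by
    rw [fsW5, fsW5, hdrop, dropWhile_middle hpM]
  rw [dualFS_of_mem (by simp [hx]), dualFS_of_mem hx, h1, h2, h4, h5]
  simp [List.append_assoc]

lemma dualFS_append_right {x M : ℕ} {a b : List ℕ} (hx : x ∈ b) (hxa : x ∉ a) (hxM : x < M) :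
    dualFS x (a ++ M :: b) = a ++ M :: dualFS x b := by
  have hpM : (fun y => decide (y < x)) M = false := by simp; omega
  have hi : b.idxOf x < b.length := List.idxOf_lt_length_iff.2 hx
  have hxaM : x ∉ a ++ [M] := by simp only [List.mem_append, List.mem_singleton]; push_neg; exact ⟨hxa, by omega⟩
  have hsh : a ++ M :: b = (a ++ [M]) ++ b := by simp
  have hclen : (a ++ [M]).length = a.length + 1 := by simp
  have hidx : ((a ++ [M]) ++ b).idxOf x = (a ++ [M]).length + b.idxOf x :=
    List.idxOf_append_of_notMem hxaM
  have htake : ((a ++ [M]) ++ b).take (((a ++ [M]) ++ b).idxOf x)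
      = (a ++ [M]) ++ b.take (b.idxOf x) := by
    rw [hidx, List.take_append, List.take_of_length_le (Nat.le_add_right _ _)]
    congr 2
    omega
  have hdrop : ((a ++ [M]) ++ b).drop (((a ++ [M]) ++ b).idxOf x + 1)
      = b.drop (b.idxOf x + 1) := by
    rw [hidx, List.drop_append, List.drop_of_length_le (by omega)]
    rw [List.nil_append]
    congr 1
    omega
  have hrev : ((a ++ [M]) ++ b.take (b.idxOf x)).reverse
      = (b.take (b.idxOf x)).reverse ++ M :: a.reverse := by simp
  have h1 : fsW1 x (a ++ M :: b) = a ++ M :: fsW1 x b := by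
    rw [fsW1, fsW1, hsh, htake, hrev, dropWhile_middle hpM]
    simp
  have h2 : fsW2 x (a ++ M :: b) = fsW2 x b := by
    rw [fsW2, fsW2, hsh, htake, hrev, takeWhile_middle hpM]
  have h4 : fsW4 x (a ++ M :: b) = fsW4 x b := by rw [fsW4, fsW4, hsh, hdrop]
  have h5 : fsW5 x (a ++ M :: b) = fsW5 x b := by rw [fsW5, fsW5, hsh, hdrop]
  rw [dualFS_of_mem (by simp [hx]), dualFS_of_mem hx, h1, h2, h4, h5]
  simp [List.append_assoc]

lemma dualFS_middle {M : ℕ} {a b : List ℕ} (ha : ∀ y ∈ a, y < M) (hb : ∀ y ∈ b, y < M) :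
    dualFS M (a ++ M :: b) = b ++ M :: a := by
  have hMa : M ∉ a := fun h => by have := ha M h; omega
  have hidx : (a ++ M :: b).idxOf M = a.length := by
    rw [List.idxOf_append_of_notMem hMa, List.idxOf_cons_self, Nat.add_zero]
  have htake : (a ++ M :: b).take ((a ++ M :: b).idxOf M) = a := by
    rw [hidx, List.take_append, Nat.sub_self, List.take_zero, List.append_nil,
      List.take_of_length_le (le_refl _)]
  have hdrop : (a ++ M :: b).drop ((a ++ M :: b).idxOf M + 1) = b := by
    rw [hidx, List.drop_append, List.drop_of_length_le (by omega)]
    simp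
  have h1 : fsW1 M (a ++ M :: b) = [] := by
    rw [fsW1, htake]
    simp only [List.reverse_eq_nil_iff, List.dropWhile_eq_nil_iff]
    intro y hy
    simpa using ha y (List.mem_reverse.1 hy)
  have h2 : fsW2 M (a ++ M :: b) = a := by
    rw [fsW2, htake, List.takeWhile_eq_self_iff.2 (fun y hy => by
      simpa using ha y (List.mem_reverse.1 hy)), List.reverse_reverse]
  have h4 : fsW4 M (a ++ M :: b) = b := by
    rw [fsW4, hdrop, List.takeWhile_eq_self_iff.2 (fun y hy => by simpa using hb y hy)]
  have h5 : fsW5 M (a ++ M :: b) = [] := by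
    rw [fsW5, hdrop, List.dropWhile_eq_nil_iff.2 (fun y hy => by simpa using hb y hy)]
  rw [dualFS_of_mem (by simp), h1, h2, h4, h5]
  simp

end C2

section C3

lemma not_mem_fsW2 {x : ℕ} {w : List ℕ} : x ∉ fsW2 x w := fun h => by
  have := mem_fsW2_lt h; omega

lemma not_mem_fsW4 {x : ℕ} {w : List ℕ} : x ∉ fsW4 x w := fun h => by
  have := mem_fsW4_lt h; omega

lemma dualFS_eq_self_iff {x : ℕ} {w : List ℕ} (hw : w.Nodup) (hx : x ∈ w) :
    dualFS x w = w ↔ fsW2 x w = [] ∧ fsW4 x w = [] := by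
  constructor
  · intro h
    rw [dualFS_of_mem hx] at h
    conv_rhs at h => rw [fs_decomp hx]
    simp only [List.append_assoc, List.singleton_append] at h
    have h2 : fsW4 x w ++ x :: (fsW2 x w ++ fsW5 x w)
        = fsW2 x w ++ x :: (fsW4 x w ++ fsW5 x w) := List.append_cancel_left h
    have e1 : (fsW4 x w ++ x :: (fsW2 x w ++ fsW5 x w)).idxOf x = (fsW4 x w).length := by
      rw [List.idxOf_append_of_notMem not_mem_fsW4, List.idxOf_cons_self, Nat.add_zero]
    have e2 : (fsW2 x w ++ x :: (fsW4 x w ++ fsW5 x w)).idxOf x = (fsW2 x w).length := by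
      rw [List.idxOf_append_of_notMem not_mem_fsW2, List.idxOf_cons_self, Nat.add_zero]
    have hlen : (fsW4 x w).length = (fsW2 x w).length := by rw [← e1, ← e2, h2]
    have hW : fsW4 x w = fsW2 x w := by
      have := congrArg (List.take (fsW4 x w).length) h2
      rwa [List.take_left, hlen, List.take_left] at this
    rcases List.eq_nil_or_concat (fsW2 x w) with h0 | ⟨l, y, h0⟩
    · exact ⟨h0, hW.trans h0⟩
    · exfalso
      have hy2 : y ∈ fsW2 x w := by rw [h0]; simp
      have hy4 : y ∈ fsW4 x w := by rw [hW]; exact hy2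
      have hc := List.nodup_iff_count_le_one.1 hw y
      conv_lhs at hc => rw [fs_decomp hx]
      simp only [List.count_append] at hc
      have c2 : 0 < (fsW2 x w).count y := List.count_pos_iff.2 hy2
      have c4 : 0 < (fsW4 x w).count y := List.count_pos_iff.2 hy4
      omega
  · rintro ⟨h2, h4⟩
    rw [dualFS_of_mem hx, h2, h4]
    conv_rhs => rw [fs_decomp hx, h2, h4]

end C3

section C4

lemma getD_eq_getElem' (w : List ℕ) {j : ℕ} (hj : j < w.length) : w.getD j 0 = w[j] := by
  simp [List.getD_eq_getElem?_getD, List.getElem?_eq_getElem hj]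

lemma nodup_indexOf_getElem {w : List ℕ} (hw : w.Nodup) {j : ℕ} (hj : j < w.length) :
    w.idxOf w[j] = j := by
  have hmem : w[j] ∈ w := List.getElem_mem hj
  have hi : w.idxOf w[j] < w.length := List.idxOf_lt_length_iff.2 hmem
  exact (hw.getElem_inj_iff (hi := hi) (hj := hj)).1 (List.getElem_idxOf hi)

lemma ext_of_le {w : List ℕ} {i : ℕ} (h1 : 1 ≤ i) (h2 : i ≤ w.length) :
    ext w i = ((w.getD (i - 1) 0 : ℕ) : ℕ∞) := if_pos ⟨h1, h2⟩

lemma ext_top {w : List ℕ} {i : ℕ} (h : ¬(1 ≤ i ∧ i ≤ w.length)) : ext w i = ⊤ := if_neg h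

lemma ext_getElem {w : List ℕ} {j : ℕ} (hj : j < w.length) : ext w (j + 1) = (w[j] : ℕ∞) := by
  rw [ext_of_le (by omega) (by omega), Nat.add_sub_cancel, getD_eq_getElem' w hj]

lemma fsW2_eq_nil_iff_pos {w : List ℕ} (hw : w.Nodup) {j x : ℕ} (hj : j < w.length)
    (hx : w[j] = x) : fsW2 x w = [] ↔ (x : ℕ∞) < ext w j := by
  have hidx : w.idxOf x = j := hx ▸ nodup_indexOf_getElem hw hj
  rw [fsW2, hidx, List.reverse_eq_nil_iff]
  cases j with
  | zero => simpa [ext_top] using WithTop.coe_lt_top x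
  | succ k =>
    have hk : k < w.length := by omega
    have htk : w.take (k + 1) = w.take k ++ [w[k]] := by
      rw [List.take_succ, List.getElem?_eq_getElem hk]; rfl
    have hne : w[k] ≠ x := by
      rw [← hx]; intro h
      exact absurd ((hw.getElem_inj_iff).1 h) (by omega)
    rw [htk, List.reverse_append, List.reverse_singleton, List.singleton_append,
      List.takeWhile_cons, ext_getElem hk]
    by_cases hlt : w[k] < x
    · rw [if_pos (decide_eq_true hlt)]
      constructor
      · intro h; exact absurd h (List.cons_ne_nil _ _)
      · intro h
        have hxk : x < w[k] := Nat.cast_lt.1 h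
        omega
    · rw [if_neg (by simpa using hlt)]
      simp only [true_iff]
      have hxk : x < w[k] := by omega
      exact Nat.cast_lt.2 hxk

lemma fsW4_eq_nil_iff_pos {w : List ℕ} (hw : w.Nodup) {j x : ℕ} (hj : j < w.length)
    (hx : w[j] = x) : fsW4 x w = [] ↔ (x : ℕ∞) < ext w (j + 2) := by
  have hidx : w.idxOf x = j := hx ▸ nodup_indexOf_getElem hw hj
  rw [fsW4, hidx]
  by_cases hk : j + 1 < w.length
  · have hne : w[j+1] ≠ x := by
      rw [← hx]; intro h
      exact absurd ((hw.getElem_inj_iff).1 h) (by omega)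
    rw [List.drop_eq_getElem_cons hk, List.takeWhile_cons]
    have : ext w (j + 2) = (w[j+1] : ℕ∞) := ext_getElem hk
    rw [this]
    by_cases hlt : w[j+1] < x
    · rw [if_pos (decide_eq_true hlt)]
      constructor
      · intro h; exact absurd h (List.cons_ne_nil _ _)
      · intro h
        have hxk : x < w[j+1] := Nat.cast_lt.1 h
        omega
    · rw [if_neg (by simpa using hlt)]
      simp only [true_iff]
      have hxk : x < w[j+1] := by omega
      exact Nat.cast_lt.2 hxk
  · rw [List.drop_of_length_le (by omega), ext_top (by omega)]
    simpa using WithTop.coe_lt_top x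

lemma mem_valeSet_iff {x : ℕ} {w : List ℕ} (hw : w.Nodup) :
    x ∈ valeSet w ↔ x ∈ w ∧ fsW2 x w = [] ∧ fsW4 x w = [] := by
  rw [valeSet, Finset.mem_image]
  constructor
  · rintro ⟨i, hi, hix⟩
    rw [Finset.mem_filter, Finset.mem_Icc] at hi
    obtain ⟨⟨h1, h2⟩, hcl, hcr⟩ := hi
    have hj : i - 1 < w.length := by omega
    have hx : w[i-1] = x := by rw [← hix, getD_eq_getElem' w hj]
    have hii : i - 1 + 1 = i := by omega
    have hext : ext w i = (x : ℕ∞) := by rw [← hii, ext_getElem hj, hx]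
    refine ⟨hx ▸ List.getElem_mem hj, ?_, ?_⟩
    · rw [fsW2_eq_nil_iff_pos hw hj hx, ← hext]
      exact hii ▸ hcl
    · rw [fsW4_eq_nil_iff_pos hw hj hx, ← hext]
      have : i - 1 + 2 = i + 1 := by omega
      rw [this]
      exact hcr
  · rintro ⟨hxw, h2, h4⟩
    have hj : w.idxOf x < w.length := List.idxOf_lt_length_iff.2 hxw
    have hx : w[w.idxOf x] = x := List.getElem_idxOf hj
    have hext : ext w (w.idxOf x + 1) = (x : ℕ∞) := by rw [ext_getElem hj, hx]
    refine ⟨w.idxOf x + 1, ?_, ?_⟩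
    · rw [Finset.mem_filter, Finset.mem_Icc]
      refine ⟨⟨by omega, by omega⟩, ?_, ?_⟩
      · rw [hext, Nat.add_sub_cancel]
        exact (fsW2_eq_nil_iff_pos hw hj hx).1 h2
      · rw [hext]
        exact (fsW4_eq_nil_iff_pos hw hj hx).1 h4
    · rw [Nat.add_sub_cancel, getD_eq_getElem' w hj, hx]

lemma mem_valeSet_iff_fixed {x : ℕ} {w : List ℕ} (hw : w.Nodup) :
    x ∈ valeSet w ↔ x ∈ w ∧ dualFS x w = w := by
  rw [mem_valeSet_iff hw]
  constructor
  · rintro ⟨h1, h⟩; exact ⟨h1, (dualFS_eq_self_iff hw h1).2 h⟩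
  · rintro ⟨h1, h⟩; exact ⟨h1, (dualFS_eq_self_iff hw h1).1 h⟩

lemma valeSet_subset {w : List ℕ} (hw : w.Nodup) : valeSet w ⊆ w.toFinset := fun x hx =>
  List.mem_toFinset.2 ((mem_valeSet_iff hw).1 hx).1

end C4

section C5

lemma foldr_dualFS_perm (L : List ℕ) (w : List ℕ) : (L.foldr dualFS w).Perm w := by
  induction L with
  | nil => exact List.Perm.refl w
  | cons x L ih => exact (dualFS_perm x _).trans ih

lemma foldr_dualFS_nil (L : List ℕ) : L.foldr dualFS [] = [] :=
  List.Perm.eq_nil (foldr_dualFS_perm L [])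

lemma foldr_decomp {M : ℕ} {a b : List ℕ} (ha : ∀ y ∈ a, y < M) (hb : ∀ y ∈ b, y < M)
    (hd : ∀ y, y ∈ a → y ∉ b) (L : List ℕ) (hL : L.Nodup) :
    L.foldr dualFS (a ++ M :: b) =
      if M ∈ L then
        (L.filter fun y => decide (y ∈ b)).foldr dualFS b
          ++ M :: (L.filter fun y => decide (y ∈ a)).foldr dualFS a
      else
        (L.filter fun y => decide (y ∈ a)).foldr dualFS a
          ++ M :: (L.filter fun y => decide (y ∈ b)).foldr dualFS b := by
  induction L with
  | nil => simp
  | cons x L ih =>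
    obtain ⟨hxL, hndL⟩ := List.nodup_cons.1 hL
    have hA := foldr_dualFS_perm (L.filter fun y => decide (y ∈ a)) a
    have hB := foldr_dualFS_perm (L.filter fun y => decide (y ∈ b)) b
    have hMa : M ∉ a := fun h => absurd (ha M h) (lt_irrefl M)
    have hMb : M ∉ b := fun h => absurd (hb M h) (lt_irrefl M)
    rw [List.foldr_cons, ih hndL]
    by_cases hxM : x = M
    · have hfa : ((x :: L).filter fun y => decide (y ∈ a)) = L.filter fun y => decide (y ∈ a) := by
        rw [List.filter_cons, if_neg (by simp only [hxM]; simpa using hMa)]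
      have hfb : ((x :: L).filter fun y => decide (y ∈ b)) = L.filter fun y => decide (y ∈ b) := by
        rw [List.filter_cons, if_neg (by simp only [hxM]; simpa using hMb)]
      have hML : M ∉ L := fun h => hxL (hxM ▸ h)
      rw [hfa, hfb, if_neg hML, if_pos (List.mem_cons.2 (Or.inl hxM.symm)), hxM]
      exact dualFS_middle (fun y hy => ha y (hA.subset hy)) (fun y hy => hb y (hB.subset hy))
    · have hmx : (M ∈ x :: L) = (M ∈ L) := by
        simp only [List.mem_cons]
        exact propext (or_iff_right (fun h => hxM h.symm))
      simp only [hmx]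
      by_cases hxa : x ∈ a
      · have hxb : x ∉ b := hd x hxa
        have hxM' : x < M := ha x hxa
        have hfa : ((x :: L).filter fun y => decide (y ∈ a))
            = x :: L.filter fun y => decide (y ∈ a) := by
          rw [List.filter_cons, if_pos (by simpa using hxa)]
        have hfb : ((x :: L).filter fun y => decide (y ∈ b)) = L.filter fun y => decide (y ∈ b) := by
          rw [List.filter_cons, if_neg (by simpa using hxb)]
        rw [hfa, hfb, List.foldr_cons]
        by_cases hML : M ∈ L
        · rw [if_pos hML, if_pos hML]
          exact dualFS_append_right (hA.mem_iff.2 hxa) (fun h => hxb (hB.subset h)) hxM'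
        · rw [if_neg hML, if_neg hML]
          exact dualFS_append_left (hA.mem_iff.2 hxa) hxM'
      · by_cases hxb : x ∈ b
        · have hxM' : x < M := hb x hxb
          have hfa : ((x :: L).filter fun y => decide (y ∈ a))
              = L.filter fun y => decide (y ∈ a) := by
            rw [List.filter_cons, if_neg (by simpa using hxa)]
          have hfb : ((x :: L).filter fun y => decide (y ∈ b))
              = x :: L.filter fun y => decide (y ∈ b) := by
            rw [List.filter_cons, if_pos (by simpa using hxb)]
          rw [hfa, hfb, List.foldr_cons]
          by_cases hML : M ∈ L
          · rw [if_pos hML, if_pos hML]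
            exact dualFS_append_left (hB.mem_iff.2 hxb) hxM'
          · rw [if_neg hML, if_neg hML]
            exact dualFS_append_right (hB.mem_iff.2 hxb) (fun h => hxa (hA.subset h)) hxM'
        · have hfa : ((x :: L).filter fun y => decide (y ∈ a))
              = L.filter fun y => decide (y ∈ a) := by
            rw [List.filter_cons, if_neg (by simpa using hxa)]
          have hfb : ((x :: L).filter fun y => decide (y ∈ b))
              = L.filter fun y => decide (y ∈ b) := by
            rw [List.filter_cons, if_neg (by simpa using hxb)]
          have hnm : ∀ c d : List ℕ, c.Perm a → d.Perm b → x ∉ c ++ M :: d := by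
            intro c d hc hdp h
            rcases List.mem_append.1 h with h | h
            · exact hxa (hc.subset h)
            · rcases List.mem_cons.1 h with h | h
              · exact hxM h
              · exact hxb (hdp.subset h)
          have hnm2 : ∀ c d : List ℕ, c.Perm b → d.Perm a → x ∉ c ++ M :: d := by
            intro c d hc hdp h
            rcases List.mem_append.1 h with h | h
            · exact hxb (hc.subset h)
            · rcases List.mem_cons.1 h with h | h
              · exact hxM h
              · exact hxa (hdp.subset h)
          rw [hfa, hfb]
          by_cases hML : M ∈ L
          · rw [if_pos hML, dualFS_of_not_mem (hnm2 _ _ hB hA)]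
          · rw [if_neg hML, dualFS_of_not_mem (hnm _ _ hA hB)]

lemma exists_max_split {w : List ℕ} (hw : w.Nodup) (hne : w ≠ []) :
    ∃ M a b, w = a ++ M :: b ∧ (∀ y ∈ a, y < M) ∧ (∀ y ∈ b, y < M) := by
  have hfne : w.toFinset.Nonempty := by
    obtain ⟨x, hx⟩ := List.exists_mem_of_ne_nil w hne
    exact ⟨x, List.mem_toFinset.2 hx⟩
  set M := w.toFinset.max' hfne with hM
  have hMw : M ∈ w := List.mem_toFinset.1 (w.toFinset.max'_mem hfne)
  have hle : ∀ y ∈ w, y ≤ M := fun y hy => Finset.le_max' _ _ (List.mem_toFinset.2 hy)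
  have hi : w.idxOf M < w.length := List.idxOf_lt_length_iff.2 hMw
  have hsplit : w = w.take (w.idxOf M) ++ M :: w.drop (w.idxOf M + 1) := by
    conv_lhs => rw [← List.take_append_drop (w.idxOf M) w]
    rw [List.drop_eq_getElem_cons hi, List.getElem_idxOf hi]
  have hw' := hsplit ▸ hw
  obtain ⟨hna, hnMb, hdis⟩ := List.nodup_append.1 hw'
  refine ⟨M, w.take (w.idxOf M), w.drop (w.idxOf M + 1), hsplit, ?_, ?_⟩
  · intro y hy
    have hyw : y ∈ w := List.take_subset _ _ hy
    have : y ≠ M := fun h => hdis y hy M List.mem_cons_self h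
    exact lt_of_le_of_ne (hle y hyw) this
  · intro y hy
    have hyw : y ∈ w := List.drop_subset _ _ hy
    have : y ≠ M := fun h => (List.nodup_cons.1 hnMb).1 (h ▸ hy)
    exact lt_of_le_of_ne (hle y hyw) this

lemma foldr_dualFS_perm_invariant : ∀ (N : ℕ) (w : List ℕ), w.length ≤ N → w.Nodup →
    ∀ L1 L2 : List ℕ, L1.Nodup → L1.Perm L2 → L1.foldr dualFS w = L2.foldr dualFS w := by
  intro N
  induction N with
  | zero =>
    intro w hlen _ L1 L2 _ _
    have : w = [] := List.eq_nil_of_length_eq_zero (by omega)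
    subst this
    rw [foldr_dualFS_nil, foldr_dualFS_nil]
  | succ N ihN =>
    intro w hlen hw L1 L2 h1 hp
    rcases eq_or_ne w [] with rfl | hne
    · rw [foldr_dualFS_nil, foldr_dualFS_nil]
    obtain ⟨M, a, b, hsplit, ha, hb⟩ := exists_max_split hw hne
    have hw' := hsplit ▸ hw
    obtain ⟨hna, hnMb, hdis⟩ := List.nodup_append.1 hw'
    have hnb : b.Nodup := (List.nodup_cons.1 hnMb).2
    have hd : ∀ y, y ∈ a → y ∉ b := fun y hy hyb => hdis y hy y (List.mem_cons_of_mem _ hyb) rfl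
    have hlab : a.length + b.length + 1 = w.length := by rw [hsplit]; simp; omega
    have h2 : L2.Nodup := hp.nodup_iff.1 h1
    rw [hsplit, foldr_decomp ha hb hd L1 h1, foldr_decomp ha hb hd L2 h2]
    have ea := ihN a (by omega) hna (L1.filter fun y => decide (y ∈ a))
      (L2.filter fun y => decide (y ∈ a)) (h1.filter _) (hp.filter _)
    have eb := ihN b (by omega) hnb (L1.filter fun y => decide (y ∈ b))
      (L2.filter fun y => decide (y ∈ b)) (h1.filter _) (hp.filter _)
    rw [ea, eb]
    by_cases hM : M ∈ L1
    · rw [if_pos hM, if_pos (hp.mem_iff.1 hM)]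
    · rw [if_neg hM, if_neg (fun h => hM (hp.mem_iff.2 h))]

lemma foldr_dualFS_congr_mem {w : List ℕ} (hw : w.Nodup) {L1 L2 : List ℕ}
    (h1 : L1.Nodup) (h2 : L2.Nodup) (hm : ∀ y, y ∈ L1 ↔ y ∈ L2) :
    L1.foldr dualFS w = L2.foldr dualFS w :=
  foldr_dualFS_perm_invariant w.length w le_rfl hw L1 L2 h1
    ((List.perm_ext_iff_of_nodup h1 h2).2 hm)

lemma foldr_dualFS_filter (w : List ℕ) (L : List ℕ) :
    L.foldr dualFS w = (L.filter fun y => decide (y ∈ w)).foldr dualFS w := by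
  induction L with
  | nil => rfl
  | cons x L ih =>
    rw [List.foldr_cons, List.filter_cons]
    by_cases hx : x ∈ w
    · rw [if_pos (by simpa using hx), List.foldr_cons, ih]
    · rw [if_neg (by simpa using hx), ← ih,
        dualFS_of_not_mem (fun h => hx ((foldr_dualFS_perm L w).subset h))]

end C5

section C6

lemma valeSet_split {M : ℕ} {a b : List ℕ} (hw : (a ++ M :: b).Nodup)
    (ha : ∀ y ∈ a, y < M) (hb : ∀ y ∈ b, y < M) (hne : a ≠ [] ∨ b ≠ []) :
    valeSet (a ++ M :: b) = valeSet a ∪ valeSet b := by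
  obtain ⟨hna, hnMb, hdis⟩ := List.nodup_append.1 hw
  have hnb : b.Nodup := (List.nodup_cons.1 hnMb).2
  have hd : ∀ y, y ∈ a → y ∉ b := fun y hy hyb => hdis y hy y (List.mem_cons_of_mem _ hyb) rfl
  have hMa : M ∉ a := fun h => absurd (ha M h) (lt_irrefl M)
  have hMb : M ∉ b := fun h => absurd (hb M h) (lt_irrefl M)
  ext x
  rw [Finset.mem_union, mem_valeSet_iff_fixed hw, mem_valeSet_iff_fixed hna,
    mem_valeSet_iff_fixed hnb]
  constructor
  · rintro ⟨hxw, hfix⟩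
    rcases List.mem_append.1 hxw with hxa | hxMb
    · left
      refine ⟨hxa, ?_⟩
      rw [dualFS_append_left hxa (ha x hxa)] at hfix
      exact List.append_cancel_right hfix
    · rcases List.mem_cons.1 hxMb with hxM | hxb
      · exfalso
        rw [hxM, dualFS_middle ha hb] at hfix
        have l1 : (b ++ M :: a).idxOf M = b.length := by
          rw [List.idxOf_append_of_notMem hMb, List.idxOf_cons_self, Nat.add_zero]
        have l2 : (a ++ M :: b).idxOf M = a.length := by
          rw [List.idxOf_append_of_notMem hMa, List.idxOf_cons_self, Nat.add_zero]
        have hlen : b.length = a.length := by rw [← l1, ← l2, hfix]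
        have hab : b = a := by
          have h3 := congrArg (List.take b.length) hfix
          rwa [List.take_left, hlen, List.take_left] at h3
        rcases hne with h | h
        · obtain ⟨y, hy⟩ := List.exists_mem_of_ne_nil a h
          exact hd y hy (hab ▸ hy)
        · obtain ⟨y, hy⟩ := List.exists_mem_of_ne_nil b h
          exact hd y (hab ▸ hy) hy
      · right
        refine ⟨hxb, ?_⟩
        have hxa : x ∉ a := fun h => hd x h hxb
        rw [dualFS_append_right hxb hxa (hb x hxb)] at hfix
        have h3 := List.append_cancel_left hfix
        injection h3
  · rintro (⟨hxa, hfa⟩ | ⟨hxb, hfb⟩)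
    · exact ⟨List.mem_append.2 (Or.inl hxa),
        by rw [dualFS_append_left hxa (ha x hxa), hfa]⟩
    · have hxa : x ∉ a := fun h => hd x h hxb
      exact ⟨List.mem_append.2 (Or.inr (List.mem_cons_of_mem _ hxb)),
        by rw [dualFS_append_right hxb hxa (hb x hxb), hfb]⟩

def orbSet (w : List ℕ) : Set (List ℕ) := {w' | ∃ S : Finset ℕ, w' = dualFSFinset S w}

lemma dualFSFinset_eq (S : Finset ℕ) (w : List ℕ) :
    dualFSFinset S w = S.toList.foldr dualFS w := rfl

lemma mem_orb_perm {w w' : List ℕ} (h : w' ∈ orbSet w) : w'.Perm w := by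
  obtain ⟨S, rfl⟩ := h
  exact foldr_dualFS_perm _ _

lemma orb_finite (w : List ℕ) : (orbSet w).Finite := by
  apply Set.Finite.subset (w.permutations).toFinset.finite_toSet
  intro l hl
  simp only [Finset.coe_sort_coe, Finset.mem_coe, List.mem_toFinset, List.mem_permutations]
  exact mem_orb_perm hl

lemma orb_nil : orbSet ([] : List ℕ) = {[]} := by
  ext l
  simp only [orbSet, Set.mem_setOf_eq, Set.mem_singleton_iff, dualFSFinset_eq]
  constructor
  · rintro ⟨S, rfl⟩; exact foldr_dualFS_nil _
  · rintro rfl; exact ⟨∅, (foldr_dualFS_nil _).symm⟩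

lemma valeSet_nil : valeSet ([] : List ℕ) = ∅ := by
  have h : Finset.Icc 1 0 = (∅ : Finset ℕ) := by decide
  rw [valeSet]
  simp [h]

lemma orb_split {M : ℕ} {a b : List ℕ} (hw : (a ++ M :: b).Nodup)
    (ha : ∀ y ∈ a, y < M) (hb : ∀ y ∈ b, y < M) :
    orbSet (a ++ M :: b) =
      (fun p : List ℕ × List ℕ => p.1 ++ M :: p.2) '' ((orbSet a) ×ˢ (orbSet b))
        ∪ (fun p : List ℕ × List ℕ => p.1 ++ M :: p.2) '' ((orbSet b) ×ˢ (orbSet a)) := by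
  obtain ⟨hna, hnMb, hdis⟩ := List.nodup_append.1 hw
  have hnb : b.Nodup := (List.nodup_cons.1 hnMb).2
  have hd : ∀ y, y ∈ a → y ∉ b := fun y hy hyb => hdis y hy y (List.mem_cons_of_mem _ hyb) rfl
  have hMa : M ∉ a := fun h => absurd (ha M h) (lt_irrefl M)
  have hMb : M ∉ b := fun h => absurd (hb M h) (lt_irrefl M)
  ext w'
  constructor
  · rintro ⟨S, rfl⟩
    rw [dualFSFinset_eq, foldr_decomp ha hb hd S.toList S.nodup_toList]
    have hAmem : (S.toList.filter fun y => decide (y ∈ a)).foldr dualFS a ∈ orbSet a := by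
      refine ⟨(S.toList.filter fun y => decide (y ∈ a)).toFinset, ?_⟩
      rw [dualFSFinset_eq]
      exact (foldr_dualFS_congr_mem hna (Finset.nodup_toList _)
        (S.nodup_toList.filter _) (fun y => by
          rw [Finset.mem_toList, List.mem_toFinset])).symm
    have hBmem : (S.toList.filter fun y => decide (y ∈ b)).foldr dualFS b ∈ orbSet b := by
      refine ⟨(S.toList.filter fun y => decide (y ∈ b)).toFinset, ?_⟩
      rw [dualFSFinset_eq]
      exact (foldr_dualFS_congr_mem hnb (Finset.nodup_toList _)
        (S.nodup_toList.filter _) (fun y => by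
          rw [Finset.mem_toList, List.mem_toFinset])).symm
    by_cases hM : M ∈ S.toList
    · rw [if_pos hM]
      exact Or.inr ⟨(_, _), ⟨hBmem, hAmem⟩, rfl⟩
    · rw [if_neg hM]
      exact Or.inl ⟨(_, _), ⟨hAmem, hBmem⟩, rfl⟩
  · have hbuild : ∀ (Sa Sb : Finset ℕ) (m : Bool),
        ∃ S : Finset ℕ, S.toList.foldr dualFS (a ++ M :: b) =
          if m then (Sb.toList.foldr dualFS b) ++ M :: (Sa.toList.foldr dualFS a)
          else (Sa.toList.foldr dualFS a) ++ M :: (Sb.toList.foldr dualFS b) := by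
      classical
      intro Sa Sb m
      set La := Sa.toList.filter fun y => decide (y ∈ a) with hLa
      set Lb := Sb.toList.filter fun y => decide (y ∈ b) with hLb
      have hLaa : ∀ y ∈ La, y ∈ a := fun y hy => by
        simpa using (List.mem_filter.1 hy).2
      have hLbb : ∀ y ∈ Lb, y ∈ b := fun y hy => by
        simpa using (List.mem_filter.1 hy).2
      refine ⟨(if m then {M} else ∅) ∪ La.toFinset ∪ Lb.toFinset, ?_⟩
      set S : Finset ℕ := (if m then {M} else ∅) ∪ La.toFinset ∪ Lb.toFinset with hS
      have hmemS : ∀ y, y ∈ S.toList ↔ ((m = true ∧ y = M) ∨ y ∈ La ∨ y ∈ Lb) := by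
        intro y
        rw [Finset.mem_toList, hS]
        simp only [Finset.mem_union, List.mem_toFinset, Finset.mem_singleton]
        cases m <;> simp [or_assoc]
      have eA : (S.toList.filter fun y => decide (y ∈ a)).foldr dualFS a
          = Sa.toList.foldr dualFS a := by
        rw [foldr_dualFS_filter a Sa.toList]
        refine foldr_dualFS_congr_mem hna (S.nodup_toList.filter _)
          (Sa.nodup_toList.filter _) (fun y => ?_)
        rw [List.mem_filter, List.mem_filter]
        constructor
        · rintro ⟨hyS, hya⟩
          rcases (hmemS y).1 hyS with ⟨_, rfl⟩ | hyL | hyL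
          · exact absurd (by simpa using hya) hMa
          · exact ⟨(List.mem_filter.1 hyL).1, hya⟩
          · exact absurd (hLbb y hyL) (hd y (by simpa using hya))
        · rintro ⟨hySa, hya⟩
          exact ⟨(hmemS y).2 (Or.inr (Or.inl (List.mem_filter.2 ⟨hySa, hya⟩))), hya⟩
      have eB : (S.toList.filter fun y => decide (y ∈ b)).foldr dualFS b
          = Sb.toList.foldr dualFS b := by
        rw [foldr_dualFS_filter b Sb.toList]
        refine foldr_dualFS_congr_mem hnb (S.nodup_toList.filter _)
          (Sb.nodup_toList.filter _) (fun y => ?_)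
        rw [List.mem_filter, List.mem_filter]
        constructor
        · rintro ⟨hyS, hyb⟩
          rcases (hmemS y).1 hyS with ⟨_, rfl⟩ | hyL | hyL
          · exact absurd (by simpa using hyb) hMb
          · exact absurd (by simpa using hyb) (hd y (hLaa y hyL))
          · exact ⟨(List.mem_filter.1 hyL).1, hyb⟩
        · rintro ⟨hySb, hyb⟩
          exact ⟨(hmemS y).2 (Or.inr (Or.inr (List.mem_filter.2 ⟨hySb, hyb⟩))), hyb⟩
      have hMS : M ∈ S.toList ↔ m = true := by
        rw [hmemS M]
        constructor
        · rintro (⟨hm, _⟩ | hyL | hyL)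
          · exact hm
          · exact absurd (hLaa M hyL) hMa
          · exact absurd (hLbb M hyL) hMb
        · intro hm; exact Or.inl ⟨hm, rfl⟩
      rw [foldr_decomp ha hb hd S.toList S.nodup_toList]
      cases m
      · rw [if_neg (fun h => by simpa using hMS.1 h), if_neg (by simp), eA, eB]
      · rw [if_pos (hMS.2 rfl), if_pos rfl, eA, eB]
    rintro (⟨⟨x1, x2⟩, ⟨⟨Sa, rfl⟩, ⟨Sb, rfl⟩⟩, rfl⟩ | ⟨⟨x1, x2⟩, ⟨⟨Sb, rfl⟩, ⟨Sa, rfl⟩⟩, rfl⟩)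
    · obtain ⟨S, hSe⟩ := hbuild Sa Sb false
      refine ⟨S, ?_⟩
      simp only [dualFSFinset_eq]
      rw [hSe]
      simp
    · obtain ⟨S, hSe⟩ := hbuild Sa Sb true
      refine ⟨S, ?_⟩
      simp only [dualFSFinset_eq]
      rw [hSe]
      simp

end C6

section C7

lemma ncard_prod' {s t : Set (List ℕ)} (hs : s.Finite) (ht : t.Finite) :
    (s ×ˢ t).ncard = s.ncard * t.ncard := by
  rw [Set.ncard_eq_toFinset_card _ (hs.prod ht), ← Set.Finite.toFinset_prod hs ht,
    Finset.card_product, ← Set.ncard_eq_toFinset_card _ hs, ← Set.ncard_eq_toFinset_card _ ht]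

lemma ncard_glue {M : ℕ} {u : List ℕ} {s t : Set (List ℕ)} (hs : s.Finite) (ht : t.Finite)
    (hsu : ∀ z ∈ s, z.Perm u) :
    ((fun p : List ℕ × List ℕ => p.1 ++ M :: p.2) '' (s ×ˢ t)).ncard = s.ncard * t.ncard := by
  rw [Set.ncard_image_of_injOn, ncard_prod' hs ht]
  rintro ⟨p1, p2⟩ ⟨hp1, hp2⟩ ⟨q1, q2⟩ ⟨hq1, hq2⟩ heq
  simp only at heq
  have hl : p1.length = q1.length := by
    rw [(hsu _ hp1).length_eq, (hsu _ hq1).length_eq]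
  have h1 : p1 = q1 := by
    have h3 := congrArg (List.take p1.length) heq
    rwa [List.take_left, List.take_left' hl.symm] at h3
  subst h1
  have h2 := List.append_cancel_left heq
  injection h2 with _ h2
  simp [h2]

lemma foldr_dualFS_singleton (M : ℕ) (L : List ℕ) : L.foldr dualFS [M] = [M] := by
  induction L with
  | nil => rfl
  | cons x L ih =>
    rw [List.foldr_cons, ih]
    by_cases hx : x = M
    · subst hx
      simpa using dualFS_middle (M := x) (a := []) (b := []) (by simp) (by simp)
    · exact dualFS_of_not_mem (by simp [hx])

lemma orb_singleton (M : ℕ) : orbSet [M] = {[M]} := by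
  ext l
  simp only [orbSet, Set.mem_setOf_eq, Set.mem_singleton_iff, dualFSFinset_eq]
  constructor
  · rintro ⟨S, rfl⟩; exact foldr_dualFS_singleton M _
  · rintro rfl; exact ⟨∅, (foldr_dualFS_singleton M _).symm⟩

lemma valeSet_singleton (M : ℕ) : valeSet [M] = {M} := by
  ext x
  rw [mem_valeSet_iff (List.nodup_singleton M), Finset.mem_singleton]
  constructor
  · rintro ⟨hx, -, -⟩; simpa using hx
  · rintro rfl
    have hidx : [x].idxOf x = 0 := List.idxOf_cons_self
    refine ⟨by simp, ?_, ?_⟩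
    · rw [fsW2, hidx]; rfl
    · rw [fsW4, hidx]; rfl

lemma valeSet_card_le {w : List ℕ} (hw : w.Nodup) : (valeSet w).card ≤ w.length :=
  le_trans (Finset.card_le_card (valeSet_subset hw))
    (le_of_eq (List.toFinset_card_of_nodup hw))

lemma orb_card : ∀ (N : ℕ) (w : List ℕ), w.length ≤ N → w.Nodup →
    (orbSet w).ncard = 2 ^ (w.length - (valeSet w).card) := by
  intro N
  induction N with
  | zero =>
    intro w hlen _
    have hw0 : w = [] := List.eq_nil_of_length_eq_zero (by omega)
    subst hw0
    rw [orb_nil, valeSet_nil]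
    simp
  | succ N ihN =>
    intro w hlen hw
    rcases eq_or_ne w [] with rfl | hne
    · rw [orb_nil, valeSet_nil]; simp
    obtain ⟨M, a, b, hsplit, ha, hb⟩ := exists_max_split hw hne
    subst hsplit
    obtain ⟨hna, hnMb, hdis⟩ := List.nodup_append.1 hw
    have hnb : b.Nodup := (List.nodup_cons.1 hnMb).2
    have hd : ∀ y, y ∈ a → y ∉ b := fun y hy hyb => hdis y hy y (List.mem_cons_of_mem _ hyb) rfl
    have hMa : M ∉ a := fun h => absurd (ha M h) (lt_irrefl M)
    have hMb : M ∉ b := fun h => absurd (hb M h) (lt_irrefl M)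
    have hlen' : (a ++ M :: b).length = a.length + b.length + 1 := by simp; omega
    by_cases hcase : a = [] ∧ b = []
    · obtain ⟨rfl, rfl⟩ := hcase
      have h1 : ([] ++ M :: [] : List ℕ) = [M] := rfl
      rw [h1, orb_singleton, valeSet_singleton]
      simp
    · have hne2 : a ≠ [] ∨ b ≠ [] := by tauto
      have hfa := orb_finite a
      have hfb := orb_finite b
      have hl2 : a.length + b.length + 1 ≤ N + 1 := by rw [← hlen']; exact hlen
      rw [orb_split hw ha hb, valeSet_split hw ha hb hne2]
      have hdisj : Disjoint
          ((fun p : List ℕ × List ℕ => p.1 ++ M :: p.2) '' (orbSet a ×ˢ orbSet b))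
          ((fun p : List ℕ × List ℕ => p.1 ++ M :: p.2) '' (orbSet b ×ˢ orbSet a)) := by
        rw [Set.disjoint_left]
        rintro z ⟨⟨p1, p2⟩, ⟨hp1, hp2⟩, rfl⟩ ⟨⟨q1, q2⟩, ⟨hq1, hq2⟩, heq⟩
        simp only at heq
        have hp1a := mem_orb_perm hp1
        have hq1b := mem_orb_perm hq1
        have hMp1 : M ∉ p1 := fun h => hMa (hp1a.subset h)
        have hMq1 : M ∉ q1 := fun h => hMb (hq1b.subset h)
        have l1 : (q1 ++ M :: q2).idxOf M = q1.length := by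
          rw [List.idxOf_append_of_notMem hMq1, List.idxOf_cons_self, Nat.add_zero]
        have l2 : (p1 ++ M :: p2).idxOf M = p1.length := by
          rw [List.idxOf_append_of_notMem hMp1, List.idxOf_cons_self, Nat.add_zero]
        have hlq : q1.length = p1.length := by rw [← l1, ← l2, heq]
        have h3 := congrArg (List.take q1.length) heq
        rw [List.take_left, List.take_left' hlq.symm] at h3
        rcases hne2 with h | h
        · obtain ⟨y, hy⟩ := List.exists_mem_of_ne_nil a h
          have hyp : y ∈ p1 := hp1a.mem_iff.2 hy
          exact hd y hy (hq1b.subset (h3 ▸ hyp))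
        · obtain ⟨y, hy⟩ := List.exists_mem_of_ne_nil b h
          have hyq : y ∈ q1 := hq1b.mem_iff.2 hy
          exact hd y (hp1a.subset (h3 ▸ hyq)) hy
      rw [Set.ncard_union_eq hdisj ((hfa.prod hfb).image _) ((hfb.prod hfa).image _),
        ncard_glue hfa hfb (fun z hz => mem_orb_perm hz),
        ncard_glue hfb hfa (fun z hz => mem_orb_perm hz),
        ihN a (by omega) hna, ihN b (by omega) hnb]
      have hvd : Disjoint (valeSet a) (valeSet b) := by
        rw [Finset.disjoint_left]
        intro x hxa hxb
        exact hd x ((mem_valeSet_iff hna).1 hxa).1 ((mem_valeSet_iff hnb).1 hxb).1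
      rw [Finset.card_union_of_disjoint hvd, hlen']
      have hka := valeSet_card_le hna
      have hkb := valeSet_card_le hnb
      have hexp : a.length + b.length + 1 - ((valeSet a).card + (valeSet b).card)
          = (a.length - (valeSet a).card) + (b.length - (valeSet b).card) + 1 := by omega
      rw [hexp, pow_succ, pow_add]
      ring

end C7


/-- Theorem 2.6: the orbit of `π ∈ S_n` under the dual Foata–Strehl
action has cardinality `2^(n - v(π))`, where `v(π)` is the number of vales of `π`. -/
theorem card_orbit (n : ℕ) (π : List ℕ) (hπ : IsPermOf n π) :
    {w : List ℕ | ∃ S : Finset ℕ, S ⊆ Finset.Icc 1 n ∧ w = dualFSFinset S π}.ncard =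
      2 ^ (n - (valeSet π).card) := by
  have hperm : π.Perm (List.range' 1 n) := hπ
  have hnd : π.Nodup := hperm.nodup_iff.2 List.nodup_range'
  have hlen : π.length = n := by rw [hperm.length_eq, List.length_range']
  have hmem : ∀ y, y ∈ π ↔ y ∈ Finset.Icc 1 n := by
    intro y
    rw [hperm.mem_iff, List.mem_range'_1, Finset.mem_Icc]
    omega
  have hset : {w : List ℕ | ∃ S : Finset ℕ, S ⊆ Finset.Icc 1 n ∧ w = dualFSFinset S π}
      = orbSet π := by
    ext w'
    simp only [Set.mem_setOf_eq, orbSet]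
    constructor
    · rintro ⟨S, _, rfl⟩
      exact ⟨S, rfl⟩
    · rintro ⟨S, rfl⟩
      classical
      refine ⟨S.filter (fun y => y ∈ π), fun y hy => (hmem y).1 (Finset.mem_filter.1 hy).2, ?_⟩
      rw [dualFSFinset_eq, dualFSFinset_eq, foldr_dualFS_filter π S.toList]
      refine foldr_dualFS_congr_mem hnd ((S.nodup_toList).filter _)
        (Finset.nodup_toList _) (fun y => ?_)
      simp [List.mem_filter]
  rw [hset, orb_card π.length π le_rfl hnd, hlen]

end OrbitProof
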